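/- For any family 𝒯 of complete theories, there exists a 𝒯-approximated complete theory if and only if 𝒯 is not E-closed, i.e., if and only if some accumulation point of 𝒯 does not belong to 𝒯. -/

import Mathlib

open FirstOrder Language Set

universe u v w w'

namespace Approx

variable {L : FirstOrder.Language.{u, v}}

/-- A complete theory: a satisfiable set of sentences deciding every sentence. -/
def CompleteTheory (T : L.Theory) : Prop :=
  T.IsSatisfiable ∧ ∀ φ : L.Sentence, φ ∈ T ∨ φ.not ∈ T

/-- `T` is `𝒯`-approximated: `T ∉ 𝒯` and every sentence of `T` lies in some member of `𝒯`. -/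
def Approximated (𝒯 : Set L.Theory) (T : L.Theory) : Prop :=
  T ∉ 𝒯 ∧ ∀ φ ∈ T, ∃ T' ∈ 𝒯, φ ∈ T'

/-- The `φ`-neighbourhood `𝒯_φ` of a family of theories. -/
def Nbhd (𝒯 : Set L.Theory) (φ : L.Sentence) : Set L.Theory :=
  {T' ∈ 𝒯 | φ ∈ T'}

/-- An accumulation point of `𝒯`: a complete theory each of whose sentences has an
infinite neighbourhood in `𝒯`. -/
def AccPoint (𝒯 : Set L.Theory) (T : L.Theory) : Prop :=
  CompleteTheory T ∧ ∀ φ ∈ T, (Nbhd 𝒯 φ).Infinite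

/-- The `E`-closure of `𝒯`: `𝒯` together with all its accumulation points. -/
def ClE (𝒯 : Set L.Theory) : Set L.Theory :=
  𝒯 ∪ {T | AccPoint 𝒯 T}


lemma mem_iff_models {T : L.Theory} (hT : CompleteTheory T)
    (M : T.ModelType) (φ : L.Sentence) : φ ∈ T ↔ (M : Type _) ⊨ φ := by
  constructor
  · intro h
    exact M.is_model.realize_of_mem φ h
  · intro h
    rcases hT.2 φ with h' | h'
    · exact h'
    · exact absurd h ((Sentence.realize_not _).mp (M.is_model.realize_of_mem _ h'))

lemma models_inf_iInf {M : Type w} [L.Structure M] {β : Type w'}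
    (s : Finset β) (f : β → L.Sentence) (φ : L.Sentence) :
    M ⊨ ((BoundedFormula.iInf (fun b : s => f b)) ⊓ φ) ↔ (∀ b ∈ s, M ⊨ f b) ∧ M ⊨ φ := by
  simp only [Sentence.Realize, Formula.Realize, BoundedFormula.realize_inf,
    BoundedFormula.realize_iInf, Subtype.forall]

/-- there exists a `𝒯`-approximated complete theory iff `𝒯` is not `E`-closed,
i.e. iff some accumulation point of `𝒯` does not belong to `𝒯`. -/
theorem exists_approximated_iff_not_eClosed
    {L : FirstOrder.Language.{u, v}} [L.IsRelational]
    (𝒯 : Set L.Theory) (h𝒯 : ∀ S ∈ 𝒯, CompleteTheory S) :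
    (∃ T : L.Theory, CompleteTheory T ∧ Approximated 𝒯 T) ↔
      (ClE 𝒯 ≠ 𝒯 ∧ ∃ T : L.Theory, AccPoint 𝒯 T ∧ T ∉ 𝒯) := by
  constructor
  · rintro ⟨T, hTc, hTn, hap⟩
    have hacc : AccPoint 𝒯 T := by
      refine ⟨hTc, fun φ hφ => ?_⟩
      by_contra hfin
      rw [Set.not_infinite] at hfin
      set F : Finset L.Theory := hfin.toFinset with hF
      have hsep : ∀ S ∈ F, ∃ ψ : L.Sentence, ψ ∈ T ∧ ψ ∉ S := by
        intro S hS
        rw [hfin.mem_toFinset] at hS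
        have hSc : CompleteTheory S := h𝒯 S hS.1
        have hne : S ≠ T := fun h => hTn (h ▸ hS.1)
        have hex : ∃ χ : L.Sentence, ¬(χ ∈ S ↔ χ ∈ T) := by
          by_contra h
          push_neg at h
          exact hne (Set.ext h)
        rcases hex with ⟨χ, hχ⟩
        rcases Classical.em (χ ∈ T) with hχT | hχT
        · have hχS : χ ∉ S := fun h => hχ (iff_of_true h hχT)
          exact ⟨χ, hχT, hχS⟩
        · have hχS : χ ∈ S := by
            by_contra h; exact hχ (iff_of_false h hχT)
          have h1 : χ.not ∈ T := (hTc.2 χ).resolve_left hχT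
          have h2 : χ.not ∉ S := by
            intro h
            have M := hSc.1.some
            exact ((Sentence.realize_not _).mp (M.is_model.realize_of_mem _ h))
              (M.is_model.realize_of_mem _ hχS)
          exact ⟨χ.not, h1, h2⟩
      choose ψ hψT hψS using hsep
      classical
      set χ : L.Sentence :=
        (BoundedFormula.iInf (fun b : F.attach => ψ b.1.1 b.1.2)) ⊓ φ with hχdef
      have M := hTc.1.some
      have hχT : χ ∈ T := by
        rw [mem_iff_models hTc M, hχdef, models_inf_iInf F.attach (fun S => ψ S.1 S.2)]
        exact ⟨fun S _ => (mem_iff_models hTc M _).mp (hψT S.1 S.2),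
          (mem_iff_models hTc M φ).mp hφ⟩
      rcases hap χ hχT with ⟨T', hT'𝒯, hχT'⟩
      have hT'c : CompleteTheory T' := h𝒯 T' hT'𝒯
      have N := hT'c.1.some
      have hNχ : (N : Type _) ⊨ χ := (mem_iff_models hT'c N χ).mp hχT'
      rw [hχdef, models_inf_iInf F.attach (fun S => ψ S.1 S.2)] at hNχ
      have hφT' : φ ∈ T' := (mem_iff_models hT'c N φ).mpr hNχ.2
      have hT'F : T' ∈ F := hfin.mem_toFinset.mpr ⟨hT'𝒯, hφT'⟩
      have hψmem : ψ T' hT'F ∈ T' :=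
        (mem_iff_models hT'c N _).mpr (hNχ.1 ⟨T', hT'F⟩ (Finset.mem_attach _ _))
      exact hψS T' hT'F hψmem
    refine ⟨?_, T, hacc, hTn⟩
    intro h
    exact hTn (h ▸ (Set.mem_union_right _ hacc : T ∈ ClE 𝒯))
  · rintro ⟨_, T, hacc, hTn⟩
    refine ⟨T, hacc.1, hTn, fun φ hφ => ?_⟩
    rcases (hacc.2 φ hφ).nonempty with ⟨T', hT'⟩
    exact ⟨T', hT'.1, hT'.2⟩

end Approx
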